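/- (Log-partition value of the optimal machine policy; the paper's Lemma used to make the step-dependent constraint well-defined.) Let P̂ be a human model, r a reward function, γ > 0, and let Q̂ be the machine policy obtained from the Y_γ backward recursion. Then E_{P̂Q̂}[−log Q̂(M^T‖H^T) + γ·r(H^T,M^T)] = log Σ_{m_1∈𝓜} Y_γ(m_1); i.e., the entropy-regularized expected reward of Q̂ under P̂ equals the logarithm of the partition value of the recursion. -/

import Mathlib

/-! Common framework: finite-horizon human–machine interaction processes.
Times are 0-indexed: step `t : Fin T` corresponds to the paper's step `t+1`.
A human model gives conditional PMFs `P(h_t | h^{t-1}, m^t)`: the value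
`p t h m a` may depend only on `h s` for `s < t`, on `m s` for `s ≤ t`, and on `a`.
A machine policy gives conditional PMFs `Q(m_t | h^{t-1}, m^{t-1})`: the value
`q t h m b` may depend only on `h s`, `m s` for `s < t`, and on `b`. -/

structure HumanModel (T : ℕ) (H M : Type*) [Fintype H] where
  p : Fin T → (Fin T → H) → (Fin T → M) → H → ℝ
  causal : ∀ (t : Fin T) (h h' : Fin T → H) (m m' : Fin T → M),
      (∀ s, s < t → h s = h' s) → (∀ s, s ≤ t → m s = m' s) → p t h m = p t h' m'
  nonneg : ∀ t h m a, 0 ≤ p t h m a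
  sum_one : ∀ t h m, ∑ a, p t h m a = 1

structure MachinePolicy (T : ℕ) (H M : Type*) [Fintype M] where
  q : Fin T → (Fin T → H) → (Fin T → M) → M → ℝ
  causal : ∀ (t : Fin T) (h h' : Fin T → H) (m m' : Fin T → M),
      (∀ s, s < t → h s = h' s) → (∀ s, s < t → m s = m' s) → q t h m = q t h' m'
  nonneg : ∀ t h m b, 0 ≤ q t h m b
  sum_one : ∀ t h m, ∑ b, q t h m b = 1

variable {T : ℕ} {H M : Type*} [Fintype H] [Fintype M]

/-- Causally conditioned distribution of the human: `P(h^T ‖ m^T)`. -/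
noncomputable def HumanModel.cc (P : HumanModel T H M) (h : Fin T → H) (m : Fin T → M) : ℝ :=
  ∏ t, P.p t h m (h t)

/-- Causally conditioned distribution of the machine: `Q(m^T ‖ h^T)`. -/
noncomputable def MachinePolicy.cc (Q : MachinePolicy T H M) (h : Fin T → H) (m : Fin T → M) : ℝ :=
  ∏ t, Q.q t h m (m t)

/-- Joint PMF `PQ(h^T, m^T)`. -/
noncomputable def jointPMF (P : HumanModel T H M) (Q : MachinePolicy T H M)
    (h : Fin T → H) (m : Fin T → M) : ℝ :=
  P.cc h m * Q.cc h m

/-- Expectation `E_{PQ}[φ(H^T, M^T)]`. -/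
noncomputable def expVal (P : HumanModel T H M) (Q : MachinePolicy T H M)
    (φ : (Fin T → H) → (Fin T → M) → ℝ) : ℝ :=
  ∑ h : Fin T → H, ∑ m : Fin T → M, jointPMF P Q h m * φ h m

/-- Causally conditioned entropy of the human, `H_{PQ}(H^T ‖ M^T)`. -/
noncomputable def humanEntropy (P : HumanModel T H M) (Q : MachinePolicy T H M) : ℝ :=
  ∑ h : Fin T → H, ∑ m : Fin T → M, jointPMF P Q h m * (- Real.log (P.cc h m))

/-- Causally conditioned entropy of the machine, `H_{PQ}(M^T ‖ H^T)`. -/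
noncomputable def machineEntropy (P : HumanModel T H M) (Q : MachinePolicy T H M) : ℝ :=
  ∑ h : Fin T → H, ∑ m : Fin T → M, jointPMF P Q h m * (- Real.log (Q.cc h m))

lemma idx_lt (T k : ℕ) [NeZero T] : T - 1 - k < T := by
  have := Nat.pos_of_ne_zero (NeZero.ne T); omega

variable [NeZero T]

/-- Backward recursion for `Y_γ(m_t | h^{t-1}, m^{t-1})`, parameterized by fuel
`k = (T-1) - t`. `Yaux P r γ k h m` is `Y_γ(m_t | h^{t-1}, m^{t-1})` at (0-indexed)
step `t = T - 1 - k`, where the current machine action `m_t` is read off as `m t`. -/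
noncomputable def Yaux (P : HumanModel T H M)
    (r : (Fin T → H) → (Fin T → M) → ℝ) (γ : ℝ) :
    ℕ → (Fin T → H) → (Fin T → M) → ℝ
  | 0, h, m =>
      Real.exp (γ * ∑ a : H, P.p ⟨T - 1, idx_lt T 0⟩ h m a *
        r (Function.update h ⟨T - 1, idx_lt T 0⟩ a) m)
  | k + 1, h, m =>
      Real.exp (∑ a : H, P.p ⟨T - 1 - (k + 1), idx_lt T (k + 1)⟩ h m a *
        Real.log (∑ b : M, Yaux P r γ k
          (Function.update h ⟨T - 1 - (k + 1), idx_lt T (k + 1)⟩ a)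
          (Function.update m ⟨T - 1 - k, idx_lt T k⟩ b)))

/-- `Y_γ(m_t | h^{t-1}, m^{t-1})` at step `t`, with `m_t = m t`. -/
noncomputable def Ycond (P : HumanModel T H M)
    (r : (Fin T → H) → (Fin T → M) → ℝ) (γ : ℝ) (t : Fin T)
    (h : Fin T → H) (m : Fin T → M) : ℝ :=
  Yaux P r γ (T - 1 - t.val) h m

/-- `Q` is the optimal machine policy `Q̂` obtained from the `Y_γ` backward recursion:
`Q̂(m_t | h^{t-1}, m^{t-1}) = Y_γ(m_t | h^{t-1}, m^{t-1}) / Y_γ(h^{t-1}, m^{t-1})`. -/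
def IsOptMachine (P : HumanModel T H M)
    (r : (Fin T → H) → (Fin T → M) → ℝ) (γ : ℝ) (Q : MachinePolicy T H M) : Prop :=
  ∀ (t : Fin T) (h : Fin T → H) (m : Fin T → M) (b : M),
    Q.q t h m b = Ycond P r γ t h (Function.update m t b) /
      ∑ b' : M, Ycond P r γ t h (Function.update m t b')

/-! ### Auxiliary machinery for the proof -/

/-- The (0-indexed) step with fuel `k`: `t = T - (k+1)`. -/
def stepIdx (T : ℕ) [NeZero T] (k : ℕ) : Fin T :=
  ⟨T - (k + 1), by have := Nat.pos_of_ne_zero (NeZero.ne T); omega⟩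

lemma stepIdx_eq_mk (k : ℕ) : stepIdx T k = ⟨T - 1 - k, idx_lt T k⟩ :=
  Fin.ext (by simp [stepIdx]; omega)

lemma Yaux_pos (P : HumanModel T H M) (r : (Fin T → H) → (Fin T → M) → ℝ) (γ : ℝ)
    (k : ℕ) (h : Fin T → H) (m : Fin T → M) : 0 < Yaux P r γ k h m := by
  cases k <;> exact Real.exp_pos _

lemma Ycond_pos (P : HumanModel T H M) (r : (Fin T → H) → (Fin T → M) → ℝ) (γ : ℝ)
    (t : Fin T) (h : Fin T → H) (m : Fin T → M) : 0 < Ycond P r γ t h m :=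
  Yaux_pos P r γ _ h m

lemma optMachine_pos [Nonempty M] (P : HumanModel T H M)
    (r : (Fin T → H) → (Fin T → M) → ℝ) (γ : ℝ) (Q : MachinePolicy T H M)
    (hQ : IsOptMachine P r γ Q) (t : Fin T) (h : Fin T → H) (m : Fin T → M) (b : M) :
    0 < Q.q t h m b := by
  rw [hQ]
  exact div_pos (Ycond_pos _ _ _ _ _ _)
    (Finset.sum_pos (fun b' _ => Ycond_pos _ _ _ _ _ _) Finset.univ_nonempty)

/-- Counting lemma: summing over all functions and all updates at a fixed
coordinate overcounts each function `card β` times. -/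
lemma sum_sum_update {α β : Type*} [Fintype α] [DecidableEq α] [Fintype β] (j : α)
    (G : (α → β) → ℝ) :
    ∑ f : α → β, ∑ a : β, G (Function.update f j a)
      = (Fintype.card β : ℝ) * ∑ f : α → β, G f := by
  set e := Equiv.funSplitAt j β with he
  have key : ∀ (f : α → β) (a : β), Function.update f j a = e.symm (a, (e f).2) := by
    intro f a; funext x
    by_cases hx : x = j
    · subst hx; simp [he, Equiv.funSplitAt, Equiv.piSplitAt]
    · simp [he, Equiv.funSplitAt, Equiv.piSplitAt, hx, Function.update_of_ne hx]
  calc ∑ f : α → β, ∑ a : β, G (Function.update f j a)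
      = ∑ f : α → β, ∑ a : β, G (e.symm (a, (e f).2)) := by simp only [key]
    _ = ∑ p : β × ({x // x ≠ j} → β), ∑ a : β, G (e.symm (a, p.2)) :=
        Equiv.sum_comp e (fun p => ∑ a : β, G (e.symm (a, p.2)))
    _ = ∑ _c : β, ∑ g : {x // x ≠ j} → β, ∑ a : β, G (e.symm (a, g)) :=
        Fintype.sum_prod_type _
    _ = (Fintype.card β : ℝ) * ∑ g : {x // x ≠ j} → β, ∑ a : β, G (e.symm (a, g)) := by
        rw [Finset.sum_const, nsmul_eq_mul, Fintype.card]
    _ = (Fintype.card β : ℝ) * ∑ f : α → β, G f := by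
        congr 1
        calc ∑ g : {x // x ≠ j} → β, ∑ a : β, G (e.symm (a, g))
            = ∑ a : β, ∑ g : {x // x ≠ j} → β, G (e.symm (a, g)) := Finset.sum_comm
          _ = ∑ p : β × ({x // x ≠ j} → β), G (e.symm p) := (Fintype.sum_prod_type (fun p : β × ({x // x ≠ j} → β) => G (e.symm p))).symm
          _ = ∑ f : α → β, G f := Equiv.sum_comp e.symm G

lemma filter_lt_succ (j : ℕ) (hj : j < T) :
    Finset.univ.filter (fun t : Fin T => t.val < j + 1) =
      insert ⟨j, hj⟩ (Finset.univ.filter (fun t : Fin T => t.val < j)) := by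
  ext t
  simp only [Finset.mem_filter, Finset.mem_insert, Finset.mem_univ, true_and, Fin.ext_iff]
  omega

/-- `L j h m = log Σ_b Y(m_j = b | h^{j-1}, m^{j-1})` for `j < T`, and `γ·r` at `j = T`. -/
noncomputable def Lfun (P : HumanModel T H M)
    (r : (Fin T → H) → (Fin T → M) → ℝ) (γ : ℝ) (j : ℕ)
    (h : Fin T → H) (m : Fin T → M) : ℝ :=
  if hj : j < T then
    Real.log (∑ b : M, Yaux P r γ (T - 1 - j) h (Function.update m ⟨j, hj⟩ b))
  else γ * r h m

/-- Nested tail expectation: `Saux k` is the expected value, starting from step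
`j = T - k` with history `(h, m)`, of `−log Q(M^T‖H^T) + γ r`. -/
noncomputable def Saux (P : HumanModel T H M) (Q : MachinePolicy T H M)
    (r : (Fin T → H) → (Fin T → M) → ℝ) (γ : ℝ) :
    ℕ → (Fin T → H) → (Fin T → M) → ℝ
  | 0, h, m => - Real.log (Q.cc h m) + γ * r h m
  | k + 1, h, m =>
      ∑ b : M, ∑ a : H,
        Q.q (stepIdx T k) h (Function.update m (stepIdx T k) b) b *
          (P.p (stepIdx T k) h (Function.update m (stepIdx T k) b) a *
            Saux P Q r γ k (Function.update h (stepIdx T k) a)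
              (Function.update m (stepIdx T k) b))

lemma log_Yaux (P : HumanModel T H M) (r : (Fin T → H) → (Fin T → M) → ℝ) (γ : ℝ) :
    ∀ k : ℕ, k + 1 ≤ T → ∀ (h : Fin T → H) (m : Fin T → M),
      Real.log (Yaux P r γ k h m)
        = ∑ a : H, P.p (stepIdx T k) h m a *
            Lfun P r γ (T - k) (Function.update h (stepIdx T k) a) m := by
  intro k hk h m
  cases k with
  | zero =>
    rw [show stepIdx T 0 = (⟨T - 1, idx_lt T 0⟩ : Fin T) from rfl]
    rw [Yaux, Real.log_exp, Nat.sub_zero, Finset.mul_sum]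
    refine Finset.sum_congr rfl fun a _ => ?_
    rw [Lfun, dif_neg (lt_irrefl T)]
    ring
  | succ k =>
    rw [Yaux, Real.log_exp]
    have h1 : (⟨T - 1 - (k + 1), idx_lt T (k + 1)⟩ : Fin T) = stepIdx T (k + 1) :=
      (stepIdx_eq_mk _).symm
    have h2 : (⟨T - 1 - k, idx_lt T k⟩ : Fin T) = stepIdx T k := (stepIdx_eq_mk _).symm
    rw [h1, h2]
    refine Finset.sum_congr rfl fun a _ => ?_
    have hj : T - (k + 1) < T := (stepIdx T k).isLt
    rw [Lfun, dif_pos hj]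
    have he : T - 1 - (T - (k + 1)) = k := by omega
    rw [he]
    rfl

lemma Saux_causal (P : HumanModel T H M) (Q : MachinePolicy T H M)
    (r : (Fin T → H) → (Fin T → M) → ℝ) (γ : ℝ) :
    ∀ k : ℕ, k ≤ T → ∀ (h h' : Fin T → H) (m m' : Fin T → M),
      (∀ s : Fin T, s.val < T - k → h s = h' s) →
      (∀ s : Fin T, s.val < T - k → m s = m' s) →
      Saux P Q r γ k h m = Saux P Q r γ k h' m' := by
  intro k
  induction k with
  | zero =>
    intro _ h h' m m' hh hm
    have hh' : h = h' := funext fun s => hh s (by simpa using s.isLt)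
    have hm' : m = m' := funext fun s => hm s (by simpa using s.isLt)
    rw [hh', hm']
  | succ k ih =>
    intro hk h h' m m' hh hm
    simp only [Saux]
    refine Finset.sum_congr rfl fun b _ => Finset.sum_congr rfl fun a _ => ?_
    set t₀ := stepIdx T k with ht₀def
    have ht₀ : t₀.val = T - (k + 1) := rfl
    have hhlt : ∀ s : Fin T, s < t₀ → h s = h' s := fun s hs =>
      hh s (by have := (Fin.lt_def.mp hs); omega)
    have hmlt : ∀ s : Fin T, s < t₀ → m s = m' s := fun s hs =>
      hm s (by have := (Fin.lt_def.mp hs); omega)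
    have hq : Q.q t₀ h (Function.update m t₀ b) = Q.q t₀ h' (Function.update m' t₀ b) :=
      Q.causal t₀ h h' _ _ hhlt (fun s hs => by
        rw [Function.update_of_ne (ne_of_lt hs), Function.update_of_ne (ne_of_lt hs)]
        exact hmlt s hs)
    have hp : P.p t₀ h (Function.update m t₀ b) = P.p t₀ h' (Function.update m' t₀ b) :=
      P.causal t₀ h h' _ _ hhlt (fun s hs => by
        rcases lt_or_eq_of_le hs with hs' | hs'
        · rw [Function.update_of_ne (ne_of_lt hs'), Function.update_of_ne (ne_of_lt hs')]
          exact hmlt s hs'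
        · subst hs'; simp)
    have hS : Saux P Q r γ k (Function.update h t₀ a) (Function.update m t₀ b)
        = Saux P Q r γ k (Function.update h' t₀ a) (Function.update m' t₀ b) := by
      refine ih (Nat.le_of_succ_le hk) _ _ _ _ (fun s hs => ?_) (fun s hs => ?_) <;>
      · by_cases hst : s = t₀
        · subst hst; simp
        · rw [Function.update_of_ne hst, Function.update_of_ne hst]
          have hv : s.val ≠ t₀.val := fun hc => hst (Fin.ext hc)
          first
          | exact hh s (by omega)
          | exact hm s (by omega)
    rw [hq, hp, hS]

lemma Saux_eq [Nonempty M] (P : HumanModel T H M)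
    (r : (Fin T → H) → (Fin T → M) → ℝ) (γ : ℝ)
    (Q : MachinePolicy T H M) (hQ : IsOptMachine P r γ Q) :
    ∀ k : ℕ, k ≤ T → ∀ (h : Fin T → H) (m : Fin T → M),
      Saux P Q r γ k h m
        = (∑ t ∈ Finset.univ.filter (fun t : Fin T => t.val < T - k),
            - Real.log (Q.q t h m (m t))) + Lfun P r γ (T - k) h m := by
  intro k
  induction k with
  | zero =>
    intro _ h m
    have hfilter : Finset.univ.filter (fun t : Fin T => t.val < T - 0) = Finset.univ :=
      Finset.filter_true_of_mem fun t _ => by simpa using t.isLt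
    rw [Saux, hfilter]
    have hlog : Real.log (Q.cc h m) = ∑ t, Real.log (Q.q t h m (m t)) := by
      rw [MachinePolicy.cc]
      exact Real.log_prod fun t _ => (optMachine_pos P r γ Q hQ t h m (m t)).ne'
    rw [hlog, Lfun, Nat.sub_zero, dif_neg (lt_irrefl T), ← Finset.sum_neg_distrib]
  | succ k ih =>
    intro hk h m
    have hk' : k ≤ T := Nat.le_of_succ_le hk
    set t₀ := stepIdx T k with ht₀def
    have ht₀v : t₀.val = T - (k + 1) := rfl
    have hjT : T - (k + 1) < T := t₀.isLt
    have hTk : T - k = T - (k + 1) + 1 := by omega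
    set C := ∑ t ∈ Finset.univ.filter (fun t : Fin T => t.val < T - (k + 1)),
      - Real.log (Q.q t h m (m t)) with hC
    set Y : M → ℝ := fun b => Yaux P r γ k h (Function.update m t₀ b) with hY
    set Z := ∑ b' : M, Y b' with hZ
    have hYpos : ∀ b, 0 < Y b := fun b => Yaux_pos _ _ _ _ _ _
    have hZpos : 0 < Z := Finset.sum_pos (fun b _ => hYpos b) Finset.univ_nonempty
    have hTk1 : T - 1 - (T - (k + 1)) = k := by omega
    -- the optimal policy at step t₀, in terms of Y and Z
    have hq : ∀ b, Q.q t₀ h m b = Y b / Z := by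
      intro b
      rw [hQ t₀ h m b]
      simp only [Ycond, ht₀v, hTk1, hY, hZ]
    have hq2 : ∀ b, Q.q t₀ h (Function.update m t₀ b) b = Y b / Z := by
      intro b
      rw [hQ t₀ h _ b]
      simp only [Ycond, ht₀v, hTk1, Function.update_idem, hY, hZ]
    -- causality rewrites at earlier steps
    have hcaus : ∀ (a : H) (b : M) (t : Fin T), t.val ≤ T - (k + 1) →
        Q.q t (Function.update h t₀ a) (Function.update m t₀ b) = Q.q t h m := by
      intro a b t ht
      refine Q.causal t _ _ _ _ (fun s hs => ?_) (fun s hs => ?_) <;>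
      · have hs' : s.val < t₀.val := lt_of_lt_of_le (Fin.lt_def.mp hs) ht
        have hne : s ≠ t₀ := fun hc => by rw [hc] at hs'; exact lt_irrefl _ hs'
        exact Function.update_of_ne hne _ _
    have hfs : Finset.univ.filter (fun t : Fin T => t.val < T - k)
        = insert t₀ (Finset.univ.filter fun t : Fin T => t.val < T - (k + 1)) := by
      rw [hTk]; exact filter_lt_succ _ hjT
    have ht₀notmem : t₀ ∉ Finset.univ.filter fun t : Fin T => t.val < T - (k + 1) := by
      simp only [Finset.mem_filter, Finset.mem_univ, true_and, ht₀v]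
      omega
    -- rewrite the inner Saux via the induction hypothesis
    have key : ∀ (b : M) (a : H),
        Saux P Q r γ k (Function.update h t₀ a) (Function.update m t₀ b)
          = ((- Real.log (Q.q t₀ h m b) + C)
              + Lfun P r γ (T - k) (Function.update h t₀ a) (Function.update m t₀ b)) := by
      intro b a
      rw [ih hk' _ _, hfs, Finset.sum_insert ht₀notmem]
      congr 1
      congr 1
      · rw [Function.update_self, hcaus a b t₀ le_rfl]
      · refine Finset.sum_congr rfl fun t ht => ?_
        have ht' : t.val < T - (k + 1) := by
          simpa only [Finset.mem_filter, Finset.mem_univ, true_and] using ht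
        have hne : t ≠ t₀ := fun hc => by rw [hc, ht₀v] at ht'; exact lt_irrefl _ ht'
        rw [Function.update_of_ne hne, hcaus a b t (le_of_lt ht')]
    rw [Saux]
    calc (∑ b : M, ∑ a : H,
          Q.q t₀ h (Function.update m t₀ b) b *
            (P.p t₀ h (Function.update m t₀ b) a *
              Saux P Q r γ k (Function.update h t₀ a) (Function.update m t₀ b)))
        = ∑ b : M, Q.q t₀ h (Function.update m t₀ b) b *
            ((- Real.log (Q.q t₀ h m b) + C) + Real.log (Y b)) := by
          refine Finset.sum_congr rfl fun b _ => ?_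
          rw [← Finset.mul_sum]
          congr 1
          calc ∑ a : H, P.p t₀ h (Function.update m t₀ b) a *
                Saux P Q r γ k (Function.update h t₀ a) (Function.update m t₀ b)
              = ∑ a : H, (P.p t₀ h (Function.update m t₀ b) a * (- Real.log (Q.q t₀ h m b) + C)
                  + P.p t₀ h (Function.update m t₀ b) a *
                      Lfun P r γ (T - k) (Function.update h t₀ a) (Function.update m t₀ b)) := by
                refine Finset.sum_congr rfl fun a _ => ?_
                rw [key b a, mul_add]
            _ = (∑ a : H, P.p t₀ h (Function.update m t₀ b) a) * (- Real.log (Q.q t₀ h m b) + C)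
                  + ∑ a : H, P.p t₀ h (Function.update m t₀ b) a *
                      Lfun P r γ (T - k) (Function.update h t₀ a) (Function.update m t₀ b) := by
                rw [Finset.sum_add_distrib, Finset.sum_mul]
            _ = (- Real.log (Q.q t₀ h m b) + C) + Real.log (Y b) := by
                rw [P.sum_one, one_mul, ← log_Yaux P r γ k hk h (Function.update m t₀ b)]
      _ = ∑ b : M, (Y b / Z) * (C + Real.log Z) := by
          refine Finset.sum_congr rfl fun b _ => ?_
          rw [hq2 b, hq b, Real.log_div (hYpos b).ne' hZpos.ne']
          ring
      _ = (∑ b : M, Q.q t₀ h m b) * (C + Real.log Z) := by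
          rw [Finset.sum_mul]
          exact Finset.sum_congr rfl fun b _ => by rw [hq b]
      _ = C + Real.log Z := by rw [Q.sum_one, one_mul]
      _ = C + Lfun P r γ (T - (k + 1)) h m := by
          congr 1
          rw [Lfun, dif_pos hjT, hTk1]
          rfl

lemma marg (P : HumanModel T H M) (Q : MachinePolicy T H M)
    (r : (Fin T → H) → (Fin T → M) → ℝ) (γ : ℝ) :
    ∀ k : ℕ, k ≤ T →
      ∑ h : Fin T → H, ∑ m : Fin T → M,
        (∏ t ∈ Finset.univ.filter (fun t : Fin T => t.val < T - k),
          P.p t h m (h t) * Q.q t h m (m t)) * Saux P Q r γ k h m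
      = ((Fintype.card H : ℝ) * (Fintype.card M : ℝ)) ^ k *
          expVal P Q (fun h m => - Real.log (Q.cc h m) + γ * r h m) := by
  intro k
  induction k with
  | zero =>
    intro _
    have hfilter : Finset.univ.filter (fun t : Fin T => t.val < T - 0) = Finset.univ :=
      Finset.filter_true_of_mem fun t _ => by simpa using t.isLt
    rw [pow_zero, one_mul, expVal]
    refine Finset.sum_congr rfl fun h _ => Finset.sum_congr rfl fun m _ => ?_
    rw [Saux, hfilter, jointPMF, HumanModel.cc, MachinePolicy.cc, ← Finset.prod_mul_distrib]
  | succ k ih =>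
    intro hk
    have hk' : k ≤ T := Nat.le_of_succ_le hk
    set t₀ := stepIdx T k with ht₀def
    have ht₀v : t₀.val = T - (k + 1) := rfl
    have hjT : T - (k + 1) < T := t₀.isLt
    have hTk : T - k = T - (k + 1) + 1 := by omega
    have hfs : Finset.univ.filter (fun t : Fin T => t.val < T - k)
        = insert t₀ (Finset.univ.filter fun t : Fin T => t.val < T - (k + 1)) := by
      rw [hTk]; exact filter_lt_succ _ hjT
    have ht₀notmem : t₀ ∉ Finset.univ.filter fun t : Fin T => t.val < T - (k + 1) := by
      simp only [Finset.mem_filter, Finset.mem_univ, true_and, ht₀v]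
      omega
    set G : (Fin T → H) → (Fin T → M) → ℝ := fun h m =>
      (∏ t ∈ Finset.univ.filter (fun t : Fin T => t.val < T - (k + 1)),
        P.p t h m (h t) * Q.q t h m (m t)) *
        (Q.q t₀ h m (m t₀) * (P.p t₀ h m (h t₀) * Saux P Q r γ k h m)) with hG
    have claim1 : ∀ (h : Fin T → H) (m : Fin T → M),
        (∏ t ∈ Finset.univ.filter (fun t : Fin T => t.val < T - (k + 1)),
          P.p t h m (h t) * Q.q t h m (m t)) * Saux P Q r γ (k + 1) h m
          = ∑ b : M, ∑ a : H, G (Function.update h t₀ a) (Function.update m t₀ b) := by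
      intro h m
      rw [Saux, Finset.mul_sum]
      refine Finset.sum_congr rfl fun b _ => ?_
      rw [Finset.mul_sum]
      refine Finset.sum_congr rfl fun a _ => ?_
      have hne_of_lt : ∀ s : Fin T, s.val < T - (k + 1) → s ≠ t₀ := fun s hs hc => by
        rw [hc, ht₀v] at hs; exact lt_irrefl _ hs
      have hprod : ∀ t ∈ Finset.univ.filter (fun t : Fin T => t.val < T - (k + 1)),
          P.p t (Function.update h t₀ a) (Function.update m t₀ b)
              ((Function.update h t₀ a) t) *
            Q.q t (Function.update h t₀ a) (Function.update m t₀ b)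
              ((Function.update m t₀ b) t)
          = P.p t h m (h t) * Q.q t h m (m t) := by
        intro t ht
        have ht' : t.val < T - (k + 1) := by
          simpa only [Finset.mem_filter, Finset.mem_univ, true_and] using ht
        have hnet : t ≠ t₀ := hne_of_lt t ht'
        have hp : P.p t (Function.update h t₀ a) (Function.update m t₀ b) = P.p t h m :=
          P.causal t _ _ _ _
            (fun s hs =>
              Function.update_of_ne (hne_of_lt s (lt_trans (Fin.lt_def.mp hs) ht')) _ _)
            (fun s hs =>
              Function.update_of_ne (hne_of_lt s (lt_of_le_of_lt (Fin.le_def.mp hs) ht')) _ _)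
        have hqq : Q.q t (Function.update h t₀ a) (Function.update m t₀ b) = Q.q t h m :=
          Q.causal t _ _ _ _
            (fun s hs =>
              Function.update_of_ne (hne_of_lt s (lt_trans (Fin.lt_def.mp hs) ht')) _ _)
            (fun s hs =>
              Function.update_of_ne (hne_of_lt s (lt_trans (Fin.lt_def.mp hs) ht')) _ _)
        rw [hp, hqq, Function.update_of_ne hnet, Function.update_of_ne hnet]
      have hq0 : Q.q t₀ (Function.update h t₀ a) (Function.update m t₀ b)
          = Q.q t₀ h (Function.update m t₀ b) :=
        Q.causal t₀ _ _ _ _ (fun s hs => Function.update_of_ne (ne_of_lt hs) _ _)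
          (fun s _ => rfl)
      have hp0 : P.p t₀ (Function.update h t₀ a) (Function.update m t₀ b)
          = P.p t₀ h (Function.update m t₀ b) :=
        P.causal t₀ _ _ _ _ (fun s hs => Function.update_of_ne (ne_of_lt hs) _ _)
          (fun s _ => rfl)
      simp only [hG]
      rw [Finset.prod_congr rfl hprod, Function.update_self, Function.update_self, hq0, hp0]
    have claim2 : ∑ h : Fin T → H, ∑ m : Fin T → M,
        ∑ b : M, ∑ a : H, G (Function.update h t₀ a) (Function.update m t₀ b)
        = (Fintype.card H : ℝ) * (Fintype.card M : ℝ) *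
            ∑ h : Fin T → H, ∑ m : Fin T → M, G h m := by
      calc ∑ h : Fin T → H, ∑ m : Fin T → M,
            ∑ b : M, ∑ a : H, G (Function.update h t₀ a) (Function.update m t₀ b)
          = ∑ h : Fin T → H, (Fintype.card M : ℝ) *
              ∑ m : Fin T → M, ∑ a : H, G (Function.update h t₀ a) m := by
            refine Finset.sum_congr rfl fun h _ => ?_
            exact sum_sum_update t₀ (fun m' => ∑ a : H, G (Function.update h t₀ a) m')
        _ = (Fintype.card M : ℝ) *
              ∑ m : Fin T → M, ∑ h : Fin T → H, ∑ a : H, G (Function.update h t₀ a) m := by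
            rw [← Finset.mul_sum, Finset.sum_comm]
        _ = (Fintype.card M : ℝ) *
              ∑ m : Fin T → M, (Fintype.card H : ℝ) * ∑ h : Fin T → H, G h m := by
            congr 1
            exact Finset.sum_congr rfl fun m _ => sum_sum_update t₀ (fun h' => G h' m)
        _ = (Fintype.card H : ℝ) * (Fintype.card M : ℝ) *
              ∑ h : Fin T → H, ∑ m : Fin T → M, G h m := by
            rw [← Finset.mul_sum, Finset.sum_comm]
            ring
    have claim3 : ∀ (h : Fin T → H) (m : Fin T → M), G h m
        = (∏ t ∈ Finset.univ.filter (fun t : Fin T => t.val < T - k),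
            P.p t h m (h t) * Q.q t h m (m t)) * Saux P Q r γ k h m := by
      intro h m
      simp only [hG]
      rw [hfs, Finset.prod_insert ht₀notmem]
      ring
    calc ∑ h : Fin T → H, ∑ m : Fin T → M,
          (∏ t ∈ Finset.univ.filter (fun t : Fin T => t.val < T - (k + 1)),
            P.p t h m (h t) * Q.q t h m (m t)) * Saux P Q r γ (k + 1) h m
        = ∑ h : Fin T → H, ∑ m : Fin T → M,
            ∑ b : M, ∑ a : H, G (Function.update h t₀ a) (Function.update m t₀ b) := by
          exact Finset.sum_congr rfl fun h _ => Finset.sum_congr rfl fun m _ => claim1 h m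
      _ = (Fintype.card H : ℝ) * (Fintype.card M : ℝ) *
            ∑ h : Fin T → H, ∑ m : Fin T → M, G h m := claim2
      _ = (Fintype.card H : ℝ) * (Fintype.card M : ℝ) *
            (((Fintype.card H : ℝ) * (Fintype.card M : ℝ)) ^ k *
              expVal P Q (fun h m => - Real.log (Q.cc h m) + γ * r h m)) := by
          rw [show (∑ h : Fin T → H, ∑ m : Fin T → M, G h m)
              = ∑ h : Fin T → H, ∑ m : Fin T → M,
                  (∏ t ∈ Finset.univ.filter (fun t : Fin T => t.val < T - k),
                    P.p t h m (h t) * Q.q t h m (m t)) * Saux P Q r γ k h m from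
            Finset.sum_congr rfl fun h _ => Finset.sum_congr rfl fun m _ => claim3 h m]
          rw [ih hk']
      _ = ((Fintype.card H : ℝ) * (Fintype.card M : ℝ)) ^ (k + 1) *
            expVal P Q (fun h m => - Real.log (Q.cc h m) + γ * r h m) := by
          ring

/-- log-partition value of the optimal machine policy: the
entropy-regularized expected reward of `Q̂` under `P̂` equals the logarithm of the
partition value `Σ_{m_1} Y_γ(m_1)` of the backward recursion:
`E_{P̂Q̂}[−log Q̂(M^T‖H^T) + γ·r(H^T,M^T)] = log Σ_{m_1} Y_γ(m_1)`. -/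
theorem optMachine_value_eq_log_partition [Nonempty H] [Nonempty M]
    (Phat : HumanModel T H M) (r : (Fin T → H) → (Fin T → M) → ℝ)
    (γ : ℝ) (hγ : 0 < γ)
    (Qhat : MachinePolicy T H M) (hQhat : IsOptMachine Phat r γ Qhat) :
    expVal Phat Qhat (fun h m => - Real.log (Qhat.cc h m) + γ * r h m) =
      Real.log (∑ b : M, Ycond Phat r γ 0 (Classical.arbitrary _)
        (Function.update (Classical.arbitrary (Fin T → M)) 0 b)) := by
  classical
  set h₀ : Fin T → H := Classical.arbitrary _ with hh₀
  set m₀ : Fin T → M := Classical.arbitrary _ with hm₀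
  have hT0 : (0 : ℕ) < T := Nat.pos_of_ne_zero (NeZero.ne T)
  have hM := marg Phat Qhat r γ T le_rfl
  have hfilter : Finset.univ.filter (fun t : Fin T => t.val < T - T) = ∅ := by
    ext t; simp
  rw [hfilter] at hM
  simp only [Finset.prod_empty, one_mul] at hM
  set c := Saux Phat Qhat r γ T h₀ m₀ with hc
  have hconst : ∀ (h : Fin T → H) (m : Fin T → M), Saux Phat Qhat r γ T h m = c := by
    intro h m
    exact Saux_causal Phat Qhat r γ T le_rfl h h₀ m m₀
      (fun s hs => absurd hs (by simp)) (fun s hs => absurd hs (by simp))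
  have hsum : ∑ h : Fin T → H, ∑ m : Fin T → M, Saux Phat Qhat r γ T h m
      = ((Fintype.card H : ℝ) * (Fintype.card M : ℝ)) ^ T * c := by
    simp only [hconst, Finset.sum_const, Finset.card_univ, nsmul_eq_mul]
    rw [Fintype.card_fun, Fintype.card_fun, Fintype.card_fin]
    push_cast
    ring
  rw [hsum] at hM
  have hcards : ((Fintype.card H : ℝ) * (Fintype.card M : ℝ)) ^ T ≠ 0 :=
    pow_ne_zero _ (mul_ne_zero (Nat.cast_ne_zero.mpr Fintype.card_ne_zero)
      (Nat.cast_ne_zero.mpr Fintype.card_ne_zero))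
  rw [(mul_left_cancel₀ hcards hM).symm, hc]
  rw [Saux_eq Phat r γ Qhat hQhat T le_rfl h₀ m₀, hfilter, Finset.sum_empty, zero_add,
    Lfun]
  rw [dif_pos (by omega : T - T < T)]
  have h0fin : (⟨T - T, by omega⟩ : Fin T) = 0 := by
    apply Fin.ext
    simp [Fin.val_zero]
  rw [h0fin]
  simp only [Ycond, Fin.val_zero]
  congr 1
  refine Finset.sum_congr rfl fun b _ => ?_
  congr 1
  omega
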